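/- Let ψ: ℝ → ℝ be a C¹ lift of a circle diffeomorphism (ψ' > 0, ψ(x+2π) = ψ(x)+2π) satisfying ∫₀^{2π} ψ'(θ) cos θ dθ = 0 and ∫₀^{2π} ψ'(θ) sin θ dθ = 0. Then there exist at least 4 points p ∈ [0, 2π) (distinct modulo 2π) such that ψ(p + π) = ψ(p) + π. -/

import Mathlib

open Real

theorem four_balance_points
    (ψ : ℝ → ℝ) (hψ : ContDiff ℝ 1 ψ)
    (hψd : ∀ x, 0 < deriv ψ x)
    (hψp : ∀ x, ψ (x + 2*π) = ψ x + 2*π)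
    (hcos : ∫ θ in (0:ℝ)..(2*π), deriv ψ θ * Real.cos θ = 0)
    (hsin : ∫ θ in (0:ℝ)..(2*π), deriv ψ θ * Real.sin θ = 0) :
    ∃ S : Finset ℝ, 4 ≤ S.card ∧
      ∀ p ∈ S, p ∈ Set.Ico (0:ℝ) (2*π) ∧ ψ (p + π) = ψ p + π := by
  have hπ : (0:ℝ) < π := Real.pi_pos
  set g : ℝ → ℝ := fun θ => ψ (θ + π) - ψ θ - π with hg
  -- antiperiodicity of g
  have hanti : ∀ θ, g (θ + π) = -(g θ) := by
    intro θ
    have h2 : θ + π + π = θ + 2*π := by ring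
    simp only [hg, h2, hψp θ]
    ring
  have hgper : ∀ θ, g (θ + 2*π) = g θ := by
    intro θ
    have : θ + 2*π = θ + π + π := by ring
    rw [this, hanti, hanti]; ring
  have hψc : Continuous ψ := hψ.continuous
  have hgc : Continuous g := by
    continuity
  have hψd' : Continuous (deriv ψ) := hψ.continuous_deriv le_rfl
  have hdψ : ∀ x, HasDerivAt ψ (deriv ψ x) x :=
    fun x => (hψ.differentiable one_ne_zero x).hasDerivAt
  have hgd : ∀ θ, HasDerivAt g (deriv ψ (θ + π) - deriv ψ θ) θ := by
    intro θ
    have h1 : HasDerivAt (fun θ => ψ (θ + π)) (deriv ψ (θ + π)) θ :=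
      (hdψ (θ + π)).comp_add_const θ π
    exact (h1.sub (hdψ θ)).sub_const π
  -- periodicity of deriv ψ
  have hdper : Function.Periodic (deriv ψ) (2*π) := by
    intro x
    have : deriv (fun y => ψ (y + 2*π)) x = deriv ψ (x + 2*π) := deriv_comp_add_const ψ _ _
    rw [← this]
    have : (fun y => ψ (y + 2*π)) = fun y => ψ y + 2*π := funext hψp
    rw [this, deriv_add_const]
  -- key integral identity: ∫₀^{2π} g θ sin(θ - c) = 0 for all c
  have hkey : ∀ c : ℝ, (∫ θ in (0:ℝ)..(2*π), g θ * Real.sin (θ - c)) = 0 := by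
    intro c
    -- integration by parts with v = -cos (θ - c)
    have hv : ∀ x : ℝ, HasDerivAt (fun θ => -Real.cos (θ - c)) (Real.sin (x - c)) x := by
      intro x
      have := ((Real.hasDerivAt_cos (x - c)).comp x
        ((hasDerivAt_id x).sub_const c)).neg
      exact this.congr_deriv (by ring)
    have hInt1 : IntervalIntegrable (fun θ => deriv ψ (θ + π) - deriv ψ θ) MeasureTheory.volume 0 (2*π) :=
      ((hψd'.comp (continuous_id.add continuous_const)).sub hψd').intervalIntegrable _ _
    have hInt2 : IntervalIntegrable (fun θ => Real.sin (θ - c)) MeasureTheory.volume 0 (2*π) :=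
      (Real.continuous_sin.comp (continuous_id.sub continuous_const)).intervalIntegrable _ _
    have ibp := intervalIntegral.integral_mul_deriv_eq_deriv_mul
      (u := g) (v := fun θ => -Real.cos (θ - c))
      (u' := fun θ => deriv ψ (θ + π) - deriv ψ θ) (v' := fun θ => Real.sin (θ - c))
      (fun x _ => hgd x) (fun x _ => hv x) hInt1 hInt2
    have hb : g (2*π) = g 0 := by simpa using hgper 0
    rw [ibp, hb]
    beta_reduce
    have hcos2 : Real.cos (2*π - c) = Real.cos (0 - c) := by
      rw [Real.cos_sub, Real.cos_sub]; simp [Real.cos_two_pi, Real.sin_two_pi]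
    rw [hcos2]
    have hshift : (∫ θ in (0:ℝ)..(2*π), deriv ψ (θ + π) * Real.cos (θ - c))
        = - ∫ θ in (0:ℝ)..(2*π), deriv ψ θ * Real.cos (θ - c) := by
      have h1 : (∫ θ in (0:ℝ)..(2*π), deriv ψ (θ + π) * Real.cos (θ - c))
          = ∫ θ in (0:ℝ)..(2*π), (fun u => deriv ψ u * Real.cos (u - π - c)) (θ + π) := by
        apply intervalIntegral.integral_congr
        intro x _
        simp only []
        congr 1
        congr 1
        ring
      rw [h1, intervalIntegral.integral_comp_add_right (fun u => deriv ψ u * Real.cos (u - π - c)) π]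
      have hperF : Function.Periodic (fun u => deriv ψ u * Real.cos (u - π - c)) (2*π) := by
        intro x
        simp only []
        rw [hdper x]
        congr 1
        have : x + 2*π - π - c = (x - π - c) + 2*π := by ring
        rw [this, Real.cos_add_two_pi]
      have h2 : (∫ u in (0+π)..(2*π+π), (fun u => deriv ψ u * Real.cos (u - π - c)) u)
          = ∫ u in (0:ℝ)..(2*π), (fun u => deriv ψ u * Real.cos (u - π - c)) u := by
        have := hperF.intervalIntegral_add_eq π 0
        simpa [add_comm] using this
      rw [h2]
      have h3 : ∀ u : ℝ, deriv ψ u * Real.cos (u - π - c) = -(deriv ψ u * Real.cos (u - c)) := by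
        intro u
        have : u - π - c = (u - c) - π := by ring
        rw [this, Real.cos_sub_pi]
        ring
      simp only [h3]
      rw [intervalIntegral.integral_neg]
    have hzero : (∫ θ in (0:ℝ)..(2*π), deriv ψ θ * Real.cos (θ - c)) = 0 := by
      have hexp : ∀ θ : ℝ, deriv ψ θ * Real.cos (θ - c)
          = Real.cos c * (deriv ψ θ * Real.cos θ) + Real.sin c * (deriv ψ θ * Real.sin θ) := by
        intro θ
        rw [Real.cos_sub]
        ring
      simp only [hexp]
      rw [intervalIntegral.integral_add, intervalIntegral.integral_const_mul,
        intervalIntegral.integral_const_mul, hcos, hsin]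
      · ring
      · exact ((continuous_const.mul (hψd'.mul Real.continuous_cos)).intervalIntegrable _ _)
      · exact ((continuous_const.mul (hψd'.mul Real.continuous_sin)).intervalIntegrable _ _)
    have hsplit : (∫ x in (0:ℝ)..(2*π), (deriv ψ (x + π) - deriv ψ x) * -Real.cos (x - c))
        = -(∫ θ in (0:ℝ)..(2*π), deriv ψ (θ + π) * Real.cos (θ - c))
          + ∫ θ in (0:ℝ)..(2*π), deriv ψ θ * Real.cos (θ - c) := by
      rw [← intervalIntegral.integral_neg, ← intervalIntegral.integral_add]
      · apply intervalIntegral.integral_congr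
        intro x _
        simp only []
        ring
      · exact (((hψd'.comp (continuous_id.add continuous_const)).mul
          (Real.continuous_cos.comp (continuous_id.sub continuous_const))).neg).intervalIntegrable _ _
      · exact ((hψd'.mul
          (Real.continuous_cos.comp (continuous_id.sub continuous_const)))).intervalIntegrable _ _
    rw [hsplit, hshift, hzero]
    ring
  -- split of the integral using antiperiodicity
  have hsplit2 : ∀ p : ℝ, (∫ θ in (0:ℝ)..(2*π), g θ * Real.sin (θ - p))
      = 2 * ∫ θ in p..(p+π), g θ * Real.sin (θ - p) := by
    intro p
    set f : ℝ → ℝ := fun θ => g θ * Real.sin (θ - p) with hf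
    have hfc : Continuous f := hgc.mul (Real.continuous_sin.comp (continuous_id.sub continuous_const))
    have hfper : Function.Periodic f (2*π) := by
      intro x
      simp only [hf, hgper x]
      congr 1
      have : x + 2*π - p = (x - p) + 2*π := by ring
      rw [this, Real.sin_add_two_pi]
    have h1 : (∫ θ in (0:ℝ)..(2*π), f θ) = ∫ θ in p..(p+2*π), f θ := by
      have := hfper.intervalIntegral_add_eq 0 p
      simpa using this
    have h2 : (∫ θ in p..(p+π), f θ) + (∫ θ in (p+π)..(p+2*π), f θ) = ∫ θ in p..(p+2*π), f θ :=
      intervalIntegral.integral_add_adjacent_intervals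
        (hfc.intervalIntegrable _ _) (hfc.intervalIntegrable _ _)
    have h3 : (∫ θ in (p+π)..(p+2*π), f θ) = ∫ θ in p..(p+π), f θ := by
      have h4 : (∫ θ in p..(p+π), (fun u => f (u + π)) θ) = ∫ θ in (p+π)..(p+2*π), f θ := by
        have := intervalIntegral.integral_comp_add_right (a := p) (b := p+π) f π
        rw [this]
        congr 1
        ring
      rw [← h4]
      apply intervalIntegral.integral_congr
      intro x _
      simp only [hf, hanti x]
      have : x + π - p = (x - p) + π := by ring
      rw [this, Real.sin_add_pi]
      ring
    rw [h1, ← h2, h3]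
    ring
  -- existence of a first zero in [0, π)
  have hexz : ∃ p ∈ Set.Ico (0:ℝ) π, g p = 0 := by
    rcases eq_or_ne (g 0) 0 with h0 | h0
    · exact ⟨0, ⟨le_refl 0, hπ⟩, h0⟩
    · have hgπ : g π = -(g 0) := by simpa using hanti 0
      rcases lt_or_gt_of_ne h0 with hneg | hpos
      · have hiv := intermediate_value_Icc (le_of_lt hπ) (hgc.continuousOn (s := Set.Icc 0 π))
        have hmem : (0:ℝ) ∈ Set.Icc (g 0) (g π) := ⟨hneg.le, by rw [hgπ]; linarith⟩
        obtain ⟨p, hp, hgp⟩ := hiv hmem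
        refine ⟨p, ⟨hp.1, lt_of_le_of_ne hp.2 ?_⟩, hgp⟩
        rintro rfl
        rw [hgp] at hgπ
        exact h0 (by linarith)
      · have hiv := intermediate_value_Icc' (le_of_lt hπ) (hgc.continuousOn (s := Set.Icc 0 π))
        have hmem : (0:ℝ) ∈ Set.Icc (g π) (g 0) := ⟨by rw [hgπ]; linarith, hpos.le⟩
        obtain ⟨p, hp, hgp⟩ := hiv hmem
        refine ⟨p, ⟨hp.1, lt_of_le_of_ne hp.2 ?_⟩, hgp⟩
        rintro rfl
        rw [hgp] at hgπ
        exact h0 (by linarith)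
  obtain ⟨p, hpmem, hgp⟩ := hexz
  -- existence of a second zero
  have hexz2 : ∃ q ∈ Set.Ico (0:ℝ) π, q ≠ p ∧ g q = 0 := by
    by_contra hcon
    push_neg at hcon
    -- g is nonvanishing on Ioo p (p+π)
    have hnz : ∀ θ ∈ Set.Ioo p (p+π), g θ ≠ 0 := by
      intro θ hθ h0
      rcases lt_or_ge θ π with hlt | hle
      · have hq := hcon θ ⟨le_trans hpmem.1 hθ.1.le, hlt⟩ hθ.1.ne'
        exact hq h0 |>.elim
      · have hmem : θ - π ∈ Set.Ico (0:ℝ) π := ⟨by linarith, by linarith [hpmem.2, hθ.2]⟩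
        have hne : θ - π ≠ p := by
          have : θ - π < p := by linarith [hθ.2]
          exact ne_of_lt this
        have : g (θ - π) = 0 := by
          have := hanti (θ - π)
          simp only [sub_add_cancel] at this
          rw [h0] at this
          linarith [this]
        exact hcon (θ - π) hmem hne this |>.elim
    -- constant sign on Ioo p (p+π)
    have hIooSub : ∀ a ∈ Set.Ioo p (p+π), ∀ b ∈ Set.Ioo p (p+π), Set.uIcc a b ⊆ Set.Ioo p (p+π) := by
      intro a ha b hb
      exact Set.OrdConnected.uIcc_subset Set.ordConnected_Ioo ha hb
    have hm : p + π/2 ∈ Set.Ioo p (p+π) := ⟨by linarith, by linarith⟩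
    have hsign : (∀ θ ∈ Set.Ioo p (p+π), 0 < g θ) ∨ (∀ θ ∈ Set.Ioo p (p+π), g θ < 0) := by
      rcases lt_or_gt_of_ne (hnz _ hm) with hneg | hpos
      · right
        intro θ hθ
        by_contra hge
        push_neg at hge
        have hgt : 0 < g θ := lt_of_le_of_ne hge (Ne.symm (hnz θ hθ))
        have hsub := hIooSub _ hm _ hθ
        have := intermediate_value_uIcc (hgc.continuousOn (s := Set.uIcc (p + π/2) θ))
        have hmem0 : (0:ℝ) ∈ Set.uIcc (g (p + π/2)) (g θ) :=
          Set.mem_uIcc.mpr (Or.inl ⟨hneg.le, hgt.le⟩)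
        obtain ⟨c, hc, hgc0⟩ := this hmem0
        exact hnz c (hsub hc) hgc0
      · left
        intro θ hθ
        by_contra hge
        push_neg at hge
        have hlt : g θ < 0 := lt_of_le_of_ne hge (hnz θ hθ)
        have hsub := hIooSub _ hθ _ hm
        have := intermediate_value_uIcc (hgc.continuousOn (s := Set.uIcc θ (p + π/2)))
        have hmem0 : (0:ℝ) ∈ Set.uIcc (g θ) (g (p + π/2)) :=
          Set.mem_uIcc.mpr (Or.inl ⟨hlt.le, hpos.le⟩)
        obtain ⟨c, hc, hgc0⟩ := this hmem0
        exact hnz c (hsub hc) hgc0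
    -- positivity of sin(θ - p) on the interval
    have hsinpos : ∀ θ ∈ Set.Ioo p (p+π), 0 < Real.sin (θ - p) := by
      intro θ hθ
      exact Real.sin_pos_of_pos_of_lt_pi (by linarith [hθ.1]) (by linarith [hθ.2])
    have hfint : IntervalIntegrable (fun θ => g θ * Real.sin (θ - p)) MeasureTheory.volume p (p+π) :=
      (hgc.mul (Real.continuous_sin.comp (continuous_id.sub continuous_const))).intervalIntegrable _ _
    have hzero := hkey p
    rw [hsplit2 p] at hzero
    have hI0 : (∫ θ in p..(p+π), g θ * Real.sin (θ - p)) = 0 := by linarith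
    rcases hsign with hpos | hneg
    · have := intervalIntegral.intervalIntegral_pos_of_pos_on hfint
        (fun x hx => mul_pos (hpos x hx) (hsinpos x hx)) (by linarith)
      linarith
    · have := intervalIntegral.intervalIntegral_pos_of_pos_on (f := fun θ => -(g θ * Real.sin (θ - p)))
        hfint.neg
        (fun x hx => by
          have := mul_pos (neg_pos.mpr (hneg x hx)) (hsinpos x hx)
          simpa [neg_mul] using this) (by linarith)
      rw [intervalIntegral.integral_neg, hI0] at this
      simp at this
  obtain ⟨q, hqmem, hqne, hgq⟩ := hexz2
  -- build the finset
  refine ⟨{p, q, p + π, q + π}, ?_, ?_⟩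
  · have h1 : p ≠ q := hqne.symm
    have h2 : p ≠ p + π := by intro h; linarith [hπ]
    have h3 : p ≠ q + π := by intro h; rw [h] at hpmem; linarith [hqmem.1, hpmem.2]
    have h4 : q ≠ p + π := by intro h; rw [h] at hqmem; linarith [hpmem.1, hqmem.2]
    have h5 : q ≠ q + π := by intro h; linarith [hπ]
    have h6 : p + π ≠ q + π := by intro h; exact h1 (by linarith)
    rw [Finset.card_insert_of_notMem (by simp [h1, h2, h3]),
      Finset.card_insert_of_notMem (by simp [h4, h5]),
      Finset.card_insert_of_notMem (by simp [h6]),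
      Finset.card_singleton]
  · intro r hr
    have hbal : ∀ x, g x = 0 → ψ (x + π) = ψ x + π := by
      intro x hx
      simp only [hg] at hx
      linarith
    have hgpπ : g (p + π) = 0 := by rw [hanti, hgp]; ring
    have hgqπ : g (q + π) = 0 := by rw [hanti, hgq]; ring
    simp only [Finset.mem_insert, Finset.mem_singleton] at hr
    rcases hr with h | h | h | h <;> rw [h]
    · exact ⟨⟨hpmem.1, by linarith [hpmem.2]⟩, hbal p hgp⟩
    · exact ⟨⟨hqmem.1, by linarith [hqmem.2]⟩, hbal q hgq⟩
    · exact ⟨⟨by linarith [hpmem.1], by linarith [hpmem.2]⟩, hbal _ hgpπ⟩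
    · exact ⟨⟨by linarith [hqmem.1], by linarith [hqmem.2]⟩, hbal _ hgqπ⟩
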